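/- Let m be a positive integer and let f : ℂ^m → ℂ be an entire function (analytic on all of ℂ^m). Then f is algebraic over ℂ(z₁,…,z_m), i.e., there exists a nonzero polynomial P ∈ ℂ[z₁,…,z_m,w] with P(z₁,…,z_m,f(z₁,…,z_m)) = 0 for all (z₁,…,z_m) ∈ ℂ^m, if and only if f is a polynomial function, i.e., there exists Q ∈ ℂ[z₁,…,z_m] with f(z) = Q(z) for all z ∈ ℂ^m. -/

import Mathlib

open Polynomial Finset

namespace EntireAlg

lemma analyticAt_mveval {m : ℕ} (Q : MvPolynomial (Fin m) ℂ) (x : Fin m → ℂ) :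
    AnalyticAt ℂ (fun z : Fin m → ℂ => MvPolynomial.eval z Q) x := by
  induction Q using MvPolynomial.induction_on with
  | C a => simpa using analyticAt_const
  | add p q hp hq => simp only [map_add]; exact hp.add hq
  | mul_X p i hp =>
      simp only [map_mul, MvPolynomial.eval_X]
      exact hp.mul ((ContinuousLinearMap.proj i : (Fin m → ℂ) →L[ℂ] ℂ).analyticAt x)

lemma poly_eval_norm_le (p : Polynomial ℂ) {k : ℕ} (hk : p.natDegree ≤ k) (t : ℂ) :
    ‖p.eval t‖ ≤ (∑ i ∈ range (p.natDegree + 1), ‖p.coeff i‖) * (1 + ‖t‖) ^ k := by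
  have h1 : (1:ℝ) ≤ 1 + ‖t‖ := by linarith [norm_nonneg t]
  calc ‖p.eval t‖ = ‖∑ i ∈ range (p.natDegree + 1), p.coeff i * t ^ i‖ := by
        rw [Polynomial.eval_eq_sum_range]
    _ ≤ ∑ i ∈ range (p.natDegree + 1), ‖p.coeff i * t ^ i‖ := norm_sum_le _ _
    _ ≤ ∑ i ∈ range (p.natDegree + 1), ‖p.coeff i‖ * (1 + ‖t‖) ^ k := by
        refine Finset.sum_le_sum fun i hi => ?_
        rw [norm_mul, norm_pow]
        refine mul_le_mul_of_nonneg_left ?_ (norm_nonneg _)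
        have hik : i ≤ k := by have := Finset.mem_range.mp hi; omega
        calc ‖t‖ ^ i ≤ (1 + ‖t‖) ^ i :=
              pow_le_pow_left₀ (norm_nonneg _) (by linarith) _
          _ ≤ (1 + ‖t‖) ^ k := pow_le_pow_right₀ h1 hik
    _ = (∑ i ∈ range (p.natDegree + 1), ‖p.coeff i‖) * (1 + ‖t‖) ^ k := by
        rw [Finset.sum_mul]

lemma root_bound {n : ℕ} (hn : 1 ≤ n) (c : ℕ → ℂ) (w : ℂ)
    (h : w ^ n + ∑ j ∈ range n, c j * w ^ j = 0) :
    ‖w‖ ≤ 1 + ∑ j ∈ range n, ‖c j‖ := by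
  have hnn : (0:ℝ) ≤ ∑ j ∈ range n, ‖c j‖ := Finset.sum_nonneg fun _ _ => norm_nonneg _
  rcases le_or_gt ‖w‖ 1 with h1 | h1
  · linarith
  · have hwn : ‖w‖ ^ n ≤ (∑ j ∈ range n, ‖c j‖) * ‖w‖ ^ (n - 1) := by
      have : w ^ n = -(∑ j ∈ range n, c j * w ^ j) := by linear_combination h
      calc ‖w‖ ^ n = ‖∑ j ∈ range n, c j * w ^ j‖ := by
            rw [← norm_pow, this, norm_neg]
        _ ≤ ∑ j ∈ range n, ‖c j‖ * ‖w‖ ^ j := by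
            refine (norm_sum_le _ _).trans (le_of_eq ?_)
            simp [norm_mul, norm_pow]
        _ ≤ ∑ j ∈ range n, ‖c j‖ * ‖w‖ ^ (n - 1) := by
            refine Finset.sum_le_sum fun j hj => ?_
            have hj' : j ≤ n - 1 := by
              have := Finset.mem_range.mp hj; omega
            exact mul_le_mul_of_nonneg_left
              (pow_le_pow_right₀ h1.le hj') (norm_nonneg _)
        _ = (∑ j ∈ range n, ‖c j‖) * ‖w‖ ^ (n - 1) := by rw [Finset.sum_mul]
    have hpow : ‖w‖ ^ n = ‖w‖ * ‖w‖ ^ (n - 1) := by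
      conv_lhs => rw [show n = (n-1) + 1 by omega]
      ring
    have hpos : 0 < ‖w‖ ^ (n - 1) := pow_pos (by linarith) _
    have : ‖w‖ ≤ ∑ j ∈ range n, ‖c j‖ := by
      rw [hpow] at hwn
      exact le_of_mul_le_mul_right (by linarith [hwn]) hpos
    linarith

lemma divide_out {g : ℂ → ℂ} (hg : Continuous g) :
    ∀ N (p h : Polynomial ℂ), p.natDegree ≤ N → p ≠ 0 →
      (∀ t, p.eval t * g t = h.eval t) →
      ∃ q : Polynomial ℂ, (∀ t, g t = q.eval t) ∧ h = p * q := by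
  intro N
  induction N with
  | zero =>
      intro p h hdeg hp heq
      obtain ⟨c, rfl⟩ : ∃ c, p = Polynomial.C c :=
        ⟨p.coeff 0, p.eq_C_of_natDegree_le_zero hdeg⟩
      have hc0 : c ≠ 0 := fun h0 => hp (by rw [h0, map_zero])
      refine ⟨Polynomial.C c⁻¹ * h, fun t => ?_, ?_⟩
      · have := heq t
        simp only [eval_C, eval_mul] at this ⊢
        field_simp
        linear_combination this
      · rw [← mul_assoc, ← map_mul, mul_inv_cancel₀ hc0, map_one, one_mul]
  | succ N ih =>
      intro p h hdeg hp heq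
      rcases Nat.lt_or_ge p.natDegree (N+1) with hlt | hge
      · exact ih p h (by omega) hp heq
      · have hdpos : 0 < p.degree := by
          rw [Polynomial.degree_eq_natDegree hp]
          exact_mod_cast by omega
        obtain ⟨r, hr⟩ := Complex.exists_root hdpos
        obtain ⟨p₁, rfl⟩ := Polynomial.dvd_iff_isRoot.mpr hr
        have hp₁ : p₁ ≠ 0 := by rintro rfl; simp at hp
        have hhr : h.IsRoot r := by
          have := heq r
          rw [Polynomial.IsRoot] at hr ⊢
          rw [← this]
          simp [hr]
        obtain ⟨h₁, rfl⟩ := Polynomial.dvd_iff_isRoot.mpr hhr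
        have heq₁ : ∀ t, p₁.eval t * g t = h₁.eval t := by
          have hEq : (fun t => p₁.eval t * g t) = fun t => h₁.eval t := by
            refine Continuous.ext_on (dense_compl_singleton r)
              ((p₁.continuous).mul hg) h₁.continuous ?_
            intro t ht
            have ht' : t - r ≠ 0 := sub_ne_zero.mpr ht
            have := heq t
            simp only [eval_mul, eval_sub, eval_X, eval_C] at this
            have : (t - r) * (p₁.eval t * g t) = (t - r) * h₁.eval t := by
              linear_combination this
            exact mul_left_cancel₀ ht' this
          exact fun t => congrFun hEq t
        have hdeg₁ : p₁.natDegree ≤ N := by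
          have := Polynomial.natDegree_mul (Polynomial.X_sub_C_ne_zero r) hp₁
          rw [Polynomial.natDegree_X_sub_C] at this
          omega
        obtain ⟨q, hq, rfl⟩ := ih p₁ h₁ hdeg₁ hp₁ heq₁
        exact ⟨q, hq, by ring⟩

lemma growth_poly {g : ℂ → ℂ} (hg : Differentiable ℂ g) {C : ℝ} {k : ℕ}
    (hC : ∀ t, ‖g t‖ ≤ C * (1 + ‖t‖) ^ k) :
    ∃ q : Polynomial ℂ, q.natDegree ≤ k ∧ ∀ t, g t = q.eval t := by
  set p := cauchyPowerSeries g 0 1 with hpdef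
  have hball : ∀ R : NNReal, 0 < R →
      HasFPowerSeriesOnBall g (cauchyPowerSeries g 0 R) 0 ⊤ :=
    fun R hR => hg.hasFPowerSeriesOnBall 0 hR
  have hpR : ∀ R : NNReal, 0 < R → cauchyPowerSeries g 0 (R:ℝ) = p :=
    fun R hR => (hball R hR).hasFPowerSeriesAt.eq_formalMultilinearSeries
      (hball 1 one_pos).hasFPowerSeriesAt
  have hCnn : 0 ≤ C := le_trans (norm_nonneg (g 0)) (by simpa using hC 0)
  have key : ∀ R : ℝ, 1 ≤ R → ∀ n, k + 1 ≤ n → ‖p n‖ * R ≤ C * 2 ^ k := by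
    intro R hR n hn
    have hR0 : (0:ℝ) < R := by linarith
    have hpeq : cauchyPowerSeries g 0 R = p := by
      have := hpR ⟨R, hR0.le⟩ (by exact_mod_cast hR0)
      exact this
    have hb := norm_cauchyPowerSeries_le g 0 R n
    rw [hpeq] at hb
    have hcont : Continuous fun θ : ℝ => ‖g (circleMap 0 R θ)‖ :=
      (hg.continuous.comp (continuous_circleMap 0 R)).norm
    have hint : (∫ θ : ℝ in (0)..2 * Real.pi, ‖g (circleMap 0 R θ)‖)
        ≤ (2 * Real.pi) * (C * (1 + R) ^ k) := by
      have hptwise : ∀ θ ∈ Set.Icc (0:ℝ) (2 * Real.pi),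
          ‖g (circleMap 0 R θ)‖ ≤ C * (1 + R) ^ k := by
        intro θ _
        have := hC (circleMap 0 R θ)
        have habs : ‖circleMap 0 R θ‖ = R := by
          rw [norm_circleMap_zero, abs_of_pos hR0]
        rwa [habs] at this
      have := intervalIntegral.integral_mono_on (a := 0) (b := 2 * Real.pi)
        Real.two_pi_pos.le (hcont.intervalIntegrable (μ := MeasureTheory.volume) 0 (2 * Real.pi))
        (intervalIntegrable_const) hptwise
      refine this.trans (le_of_eq ?_)
      rw [intervalIntegral.integral_const, smul_eq_mul, sub_zero]
    have habsR : |R| = R := abs_of_pos hR0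
    have h1 : ‖p n‖ ≤ C * (1 + R) ^ k * ((R:ℝ)⁻¹) ^ n := by
      refine hb.trans ?_
      rw [habsR]
      have h2π : (0:ℝ) < 2 * Real.pi := Real.two_pi_pos
      have : (2 * Real.pi)⁻¹ * ∫ θ : ℝ in (0)..2 * Real.pi, ‖g (circleMap 0 R θ)‖
          ≤ C * (1 + R) ^ k := by
        rw [inv_mul_le_iff₀ h2π]
        refine hint.trans (le_of_eq (by ring))
      exact mul_le_mul_of_nonneg_right this (by positivity)
    have h2 : (1 + R) ^ k ≤ 2 ^ k * R ^ k := by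
      rw [← mul_pow]
      exact pow_le_pow_left₀ (by linarith) (by linarith) _
    have h3 : R ^ (k+1) ≤ R ^ n := pow_le_pow_right₀ hR hn
    have h4 : (R ^ n)⁻¹ ≤ (R ^ (k+1))⁻¹ := by
      apply inv_anti₀ (by positivity) h3
    calc ‖p n‖ * R ≤ (C * (1 + R) ^ k * ((R:ℝ)⁻¹) ^ n) * R :=
          mul_le_mul_of_nonneg_right h1 hR0.le
      _ ≤ (C * (2 ^ k * R ^ k) * (R ^ (k+1))⁻¹) * R := by
          rw [inv_pow]
          have := mul_le_mul (mul_le_mul_of_nonneg_left h2 hCnn) h4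
            (by positivity) (by positivity)
          exact mul_le_mul_of_nonneg_right this hR0.le
      _ = C * 2 ^ k := by
          rw [pow_succ]
          field_simp
  have hcoeff : ∀ n, k < n → p.coeff n = 0 := by
    intro n hn
    have hnorm : ‖p n‖ = 0 := by
      by_contra hne
      have hpos : 0 < ‖p n‖ := lt_of_le_of_ne (norm_nonneg _) (Ne.symm hne)
      set R : ℝ := max 1 ((C * 2 ^ k + 1) / ‖p n‖) with hRdef
      have h5 := key R (le_max_left _ _) n (by omega)
      have h6 : C * 2 ^ k + 1 ≤ R * ‖p n‖ := (div_le_iff₀ hpos).mp (le_max_right _ _)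
      rw [mul_comm] at h5
      linarith
    have hzero : p n = 0 := norm_eq_zero.mp hnorm
    show p n 1 = 0
    rw [hzero]; rfl
  classical
  refine ⟨∑ n ∈ range (k+1), Polynomial.C (p.coeff n) * Polynomial.X ^ n, ?_, ?_⟩
  · refine Polynomial.natDegree_sum_le_of_forall_le _ _ fun i hi => ?_
    refine (Polynomial.natDegree_C_mul_le _ _).trans ?_
    rw [Polynomial.natDegree_X_pow]
    exact Nat.le_of_lt_succ (Finset.mem_range.mp hi)
  · intro t
    have hsum := (hball 1 one_pos).hasSum (y := t) (by simp)
    simp only [zero_add] at hsum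
    have hsum' : HasSum (fun n => t ^ n • p.coeff n) (g t) := by
      simpa [FormalMultilinearSeries.apply_eq_pow_smul_coeff] using hsum
    have hfin : ∀ n ∉ range (k+1), t ^ n • p.coeff n = 0 := by
      intro n hn
      rw [hcoeff n (by simpa using hn), smul_zero]
    have hfs := hasSum_sum_of_ne_finset_zero (L := SummationFilter.unconditional ℕ) (s := range (k+1)) hfin
    have := hsum'.unique hfs
    rw [this, Polynomial.eval_finset_sum]
    refine Finset.sum_congr rfl fun i _ => ?_
    rw [smul_eq_mul, Polynomial.eval_mul, Polynomial.eval_C, Polynomial.eval_pow,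
      Polynomial.eval_X, mul_comm]

lemma line_poly {g : ℂ → ℂ} (hg : Differentiable ℂ g)
    (R : Polynomial (Polynomial ℂ)) (hR : R ≠ 0) {d : ℕ}
    (hcd : ∀ k, (R.coeff k).natDegree ≤ d) (hnd : R.natDegree ≤ d)
    (hrel : ∀ t, ∑ k ∈ range (R.natDegree + 1), (R.coeff k).eval t * g t ^ k = 0) :
    ∃ q : Polynomial ℂ, q.natDegree ≤ d * d + d ∧ ∀ t, g t = q.eval t := by
  classical
  set n := R.natDegree with hn
  set a := R.coeff n with ha
  have ha0 : a ≠ 0 := by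
    rw [ha, hn, ← Polynomial.leadingCoeff]
    exact Polynomial.leadingCoeff_ne_zero.mpr hR
  have hn1 : 1 ≤ n := by
    by_contra hcon
    have hn0 : n = 0 := by omega
    apply ha0
    rw [ha, hn0]
    apply Polynomial.funext (R := ℂ)
    intro t
    have := hrel t
    rw [hn0] at this
    simpa using this
  set G := fun t => a.eval t * g t with hG
  set b := fun j => R.coeff j * a ^ (n - 1 - j) with hb
  have hGrel : ∀ t, G t ^ n + ∑ j ∈ range n, (b j).eval t * G t ^ j = 0 := by
    intro t
    have h0 := hrel t
    have expand : G t ^ n + ∑ j ∈ range n, (b j).eval t * G t ^ j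
        = a.eval t ^ (n-1) * ∑ k ∈ range (n+1), (R.coeff k).eval t * g t ^ k := by
      rw [Finset.sum_range_succ, mul_add, Finset.mul_sum]
      have hsum : ∀ j ∈ range n, (b j).eval t * G t ^ j
          = a.eval t ^ (n-1) * ((R.coeff j).eval t * g t ^ j) := by
        intro j hj
        have hjn : j ≤ n - 1 := by have := Finset.mem_range.mp hj; omega
        simp only [hb, hG, Polynomial.eval_mul, Polynomial.eval_pow, mul_pow]
        have : a.eval t ^ (n - 1 - j) * a.eval t ^ j = a.eval t ^ (n-1) := by
          rw [← pow_add]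
          congr 1
          omega
        linear_combination ((R.coeff j).eval t * g t ^ j) * this
      have hlast : G t ^ n = a.eval t ^ (n-1) * ((R.coeff n).eval t * g t ^ n) := by
        simp only [hG, mul_pow]
        have : a.eval t ^ n = a.eval t ^ (n-1) * a.eval t := by
          rw [← pow_succ]
          congr 1
          omega
        rw [this, ← ha]
        ring
      rw [Finset.sum_congr rfl hsum, hlast]
      ring
    rw [expand, hn] at *
    rw [h0, mul_zero]
  have hbdeg : ∀ j, (b j).natDegree ≤ d * d + d := by
    intro j
    refine (Polynomial.natDegree_mul_le).trans ?_
    have h2 : (a ^ (n - 1 - j)).natDegree ≤ (n - 1 - j) * d := by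
      refine (Polynomial.natDegree_pow_le).trans ?_
      exact Nat.mul_le_mul_left _ (hcd n)
    have h3 : (n - 1 - j) * d ≤ d * d := by
      refine Nat.mul_le_mul_right _ ?_
      omega
    have h1 := hcd j
    omega
  set e := d * d + d with he
  set S := 1 + ∑ j ∈ range n, (∑ i ∈ range ((b j).natDegree + 1), ‖(b j).coeff i‖) with hS
  have hGgrowth : ∀ t, ‖G t‖ ≤ S * (1 + ‖t‖) ^ e := by
    intro t
    have h1t : (1:ℝ) ≤ (1 + ‖t‖) ^ e :=
      one_le_pow₀ (by linarith [norm_nonneg t])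
    calc ‖G t‖ ≤ 1 + ∑ j ∈ range n, ‖(b j).eval t‖ :=
          root_bound hn1 (fun j => (b j).eval t) (G t) (hGrel t)
      _ ≤ (1 + ‖t‖) ^ e + ∑ j ∈ range n,
            (∑ i ∈ range ((b j).natDegree + 1), ‖(b j).coeff i‖) * (1 + ‖t‖) ^ e := by
          refine add_le_add h1t (Finset.sum_le_sum fun j _ => ?_)
          exact poly_eval_norm_le (b j) (hbdeg j) t
      _ = S * (1 + ‖t‖) ^ e := by
          rw [hS, add_mul, one_mul, Finset.sum_mul]
  have hGdiff : Differentiable ℂ G := a.differentiable.mul hg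
  obtain ⟨h₂, hhdeg, hh⟩ := growth_poly hGdiff hGgrowth
  have heq' : ∀ t, a.eval t * g t = h₂.eval t := fun t => hh t
  obtain ⟨q, hq, hfact⟩ := divide_out hg.continuous a.natDegree a h₂ le_rfl ha0 heq'
  refine ⟨q, ?_, hq⟩
  by_cases hq0 : q = 0
  · simp [hq0]
  · have hmul := Polynomial.natDegree_mul ha0 hq0
    rw [hfact] at hhdeg
    rw [hmul] at hhdeg
    omega

noncomputable def lineSub {m : ℕ} (z : Fin m → ℂ) :
    MvPolynomial (Fin (m+1)) ℂ →+* Polynomial (Polynomial ℂ) :=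
  MvPolynomial.eval₂Hom ((Polynomial.C).comp (Polynomial.C))
    (fun i => Fin.lastCases Polynomial.X
      (fun j => Polynomial.C (Polynomial.C (z j) * Polynomial.X)) i)

lemma lineSub_eval {m : ℕ} (z : Fin m → ℂ) (P : MvPolynomial (Fin (m+1)) ℂ) (t w₀ : ℂ) :
    Polynomial.eval₂ (Polynomial.evalRingHom t) w₀ (lineSub z P)
      = MvPolynomial.eval (Fin.snoc (t • z) w₀) P := by
  have hcomp := MvPolynomial.eval₂_comp_left
    (Polynomial.eval₂RingHom (Polynomial.evalRingHom t) w₀)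
    ((Polynomial.C).comp (Polynomial.C) : ℂ →+* Polynomial (Polynomial ℂ))
    (fun i => Fin.lastCases Polynomial.X
      (fun j => Polynomial.C (Polynomial.C (z j) * Polynomial.X)) i) P
  rw [lineSub, MvPolynomial.coe_eval₂Hom]
  rw [show Polynomial.eval₂ (Polynomial.evalRingHom t) w₀ (MvPolynomial.eval₂ _ _ P)
      = (Polynomial.eval₂RingHom (Polynomial.evalRingHom t) w₀) (MvPolynomial.eval₂ _ _ P)
      from rfl, hcomp]
  have h1 : (Polynomial.eval₂RingHom (Polynomial.evalRingHom t) w₀).comp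
      ((Polynomial.C).comp (Polynomial.C) : ℂ →+* Polynomial (Polynomial ℂ)) = RingHom.id ℂ := by
    ext a
    simp
  have h2 : ((Polynomial.eval₂RingHom (Polynomial.evalRingHom t) w₀)) ∘
      (fun i => Fin.lastCases Polynomial.X
        (fun j => Polynomial.C (Polynomial.C (z j) * Polynomial.X)) i)
      = Fin.snoc (t • z) w₀ := by
    funext i
    refine Fin.lastCases ?_ (fun j => ?_) i
    · simp [Fin.snoc_last]
    · simp [Fin.snoc_castSucc]
      ring
  rw [h1, h2]
  rfl

lemma lineSub_apply {m : ℕ} (z : Fin m → ℂ) (P : MvPolynomial (Fin (m+1)) ℂ) :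
    lineSub z P = ∑ s ∈ P.support,
      Polynomial.C (Polynomial.C (P.coeff s)
          * ∏ j : Fin m, (Polynomial.C (z j) * Polynomial.X) ^ s (Fin.castSucc j))
        * Polynomial.X ^ s (Fin.last m) := by
  rw [lineSub, MvPolynomial.coe_eval₂Hom, MvPolynomial.eval₂_eq']
  refine Finset.sum_congr rfl fun s _ => ?_
  rw [Fin.prod_univ_castSucc]
  simp only [Fin.lastCases_castSucc, Fin.lastCases_last, RingHom.coe_comp, Function.comp_apply]
  rw [map_mul, map_prod]
  simp_rw [map_pow]
  ring

lemma deg_aux {m : ℕ} (P : MvPolynomial (Fin (m+1)) ℂ) (s : Fin (m+1) →₀ ℕ)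
    (hs : s ∈ P.support) :
    (∑ j : Fin m, s (Fin.castSucc j)) + s (Fin.last m) ≤ P.totalDegree := by
  have h1 := MvPolynomial.le_totalDegree hs
  rw [Finsupp.sum_fintype _ _ (fun _ => rfl)] at h1
  rwa [Fin.sum_univ_castSucc] at h1

lemma lineSub_coeff_natDegree {m : ℕ} (z : Fin m → ℂ) (P : MvPolynomial (Fin (m+1)) ℂ)
    (k : ℕ) : ((lineSub z P).coeff k).natDegree ≤ P.totalDegree := by
  classical
  rw [lineSub_apply, Polynomial.finset_sum_coeff]
  refine Polynomial.natDegree_sum_le_of_forall_le _ _ fun s hs => ?_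
  rw [Polynomial.coeff_C_mul, Polynomial.coeff_X_pow]
  by_cases he : k = s (Fin.last m)
  · rw [if_pos he, mul_one]
    refine (Polynomial.natDegree_mul_le).trans ?_
    rw [Polynomial.natDegree_C, zero_add]
    refine (Polynomial.natDegree_prod_le _ _).trans ?_
    have hsum : ∑ j : Fin m, ((Polynomial.C (z j) * Polynomial.X) ^ s (Fin.castSucc j)).natDegree
        ≤ ∑ j : Fin m, s (Fin.castSucc j) := by
      refine Finset.sum_le_sum fun j _ => ?_
      refine (Polynomial.natDegree_pow_le).trans ?_
      have h1 : (Polynomial.C (z j) * Polynomial.X).natDegree ≤ 1 :=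
        (Polynomial.natDegree_C_mul_le _ _).trans (le_of_eq Polynomial.natDegree_X)
      calc s (Fin.castSucc j) * (Polynomial.C (z j) * Polynomial.X).natDegree
          ≤ s (Fin.castSucc j) * 1 := Nat.mul_le_mul_left _ h1
        _ = s (Fin.castSucc j) := mul_one _
    refine hsum.trans ?_
    have := deg_aux P s hs
    omega
  · rw [if_neg he, mul_zero]
    simp
  
lemma lineSub_natDegree {m : ℕ} (z : Fin m → ℂ) (P : MvPolynomial (Fin (m+1)) ℂ) :
    (lineSub z P).natDegree ≤ P.totalDegree := by
  rw [lineSub_apply]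
  refine Polynomial.natDegree_sum_le_of_forall_le _ _ fun s hs => ?_
  refine (Polynomial.natDegree_mul_le).trans ?_
  rw [Polynomial.natDegree_C, zero_add, Polynomial.natDegree_X_pow]
  have := deg_aux P s hs
  omega

end EntireAlg

open EntireAlg Polynomial Finset in
/-- an entire function `f : ℂ^m → ℂ` is algebraic over `ℂ(z₁,…,z_m)`
if and only if it is a polynomial function. -/
theorem entire_algebraic_iff_polynomial
    (m : ℕ) (hm : 0 < m) (f : (Fin m → ℂ) → ℂ) (hf : ∀ x, AnalyticAt ℂ f x) :
    (∃ P : MvPolynomial (Fin (m + 1)) ℂ, P ≠ 0 ∧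
        ∀ z : Fin m → ℂ, MvPolynomial.eval (Fin.snoc z (f z)) P = 0)
      ↔ (∃ Q : MvPolynomial (Fin m) ℂ, ∀ z : Fin m → ℂ, f z = MvPolynomial.eval z Q) := by
  constructor
  · rintro ⟨P, hP0, hPrel⟩
    classical
    set d := P.totalDegree with hd
    set D := d * d + d with hD
    have hfdiff : Differentiable ℂ f := fun x => (hf x).differentiableAt
    have hudiff : ∀ z : Fin m → ℂ, Differentiable ℂ (fun t : ℂ => t • z) :=
      fun z => ((ContinuousLinearMap.id ℂ ℂ).smulRight z).differentiable
    have hline : ∀ z : Fin m → ℂ, lineSub z P ≠ 0 →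
        ∃ q : Polynomial ℂ, q.natDegree ≤ D ∧ ∀ t : ℂ, f (t • z) = q.eval t := by
      intro z hz
      have hgdiff : Differentiable ℂ (fun t : ℂ => f (t • z)) :=
        hfdiff.comp (hudiff z)
      refine line_poly hgdiff (lineSub z P) hz (d := d)
        (fun k => lineSub_coeff_natDegree z P k) (lineSub_natDegree z P) ?_
      intro t
      have h1 := lineSub_eval z P t (f (t • z))
      rw [Polynomial.eval₂_eq_sum_range] at h1
      exact h1.trans (hPrel (t • z))
    obtain ⟨y, w₀, hyw⟩ : ∃ y w₀, MvPolynomial.eval (Fin.snoc y w₀) P ≠ 0 := by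
      by_contra hcon
      push_neg at hcon
      apply hP0
      apply MvPolynomial.funext
      intro x
      have h2 := hcon (fun j => x (Fin.castSucc j)) (x (Fin.last m))
      have h3 : Fin.snoc (fun j => x (Fin.castSucc j)) (x (Fin.last m)) = x := by
        funext i
        refine Fin.lastCases ?_ (fun j => ?_) i
        · rw [Fin.snoc_last]
        · rw [Fin.snoc_castSucc]
      rw [h3] at h2
      simpa using h2
    have hgood_of : ∀ z : Fin m → ℂ, MvPolynomial.eval (Fin.snoc z w₀) P ≠ 0 →
        lineSub z P ≠ 0 := by
      intro z hz hzero
      apply hz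
      have h4 := lineSub_eval z P 1 w₀
      rw [hzero] at h4
      simp only [Polynomial.eval₂_zero] at h4
      rw [one_smul] at h4
      exact h4.symm
    -- specialize the last variable to w₀
    set H : MvPolynomial (Fin m) ℂ := MvPolynomial.eval₂ MvPolynomial.C
      (fun i => Fin.lastCases (MvPolynomial.C w₀) MvPolynomial.X i) P with hHdef
    have hH : ∀ z : Fin m → ℂ,
        MvPolynomial.eval z H = MvPolynomial.eval (Fin.snoc z w₀) P := by
      intro z
      rw [hHdef]
      rw [MvPolynomial.eval₂_comp_left (MvPolynomial.eval z) (MvPolynomial.C)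
        (fun i => Fin.lastCases (MvPolynomial.C w₀) MvPolynomial.X i) P]
      have h1 : (MvPolynomial.eval z).comp (MvPolynomial.C) = RingHom.id ℂ := by
        ext a
        simp
      have h2 : (MvPolynomial.eval z) ∘
          (fun i => Fin.lastCases (MvPolynomial.C w₀) MvPolynomial.X i)
          = Fin.snoc z w₀ := by
        funext i
        refine Fin.lastCases ?_ (fun j => ?_) i
        · simp [Fin.snoc_last]
        · simp [Fin.snoc_castSucc]
      rw [h1, h2]
      rfl
    have hdense : Dense {z : Fin m → ℂ | MvPolynomial.eval z H ≠ 0} := by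
      by_contra hdc
      rw [dense_iff_inter_open] at hdc
      push_neg at hdc
      obtain ⟨U, hU, hUne, hUs⟩ := hdc
      obtain ⟨z₀, hz₀⟩ := hUne
      have hev : (fun z => MvPolynomial.eval z H) =ᶠ[nhds z₀] (fun _ => 0) := by
        filter_upwards [hU.mem_nhds hz₀] with z hz
        by_contra hzz
        exact Set.eq_empty_iff_forall_notMem.mp hUs z ⟨hz, hzz⟩
      have h0 := AnalyticOnNhd.eq_of_eventuallyEq (𝕜 := ℂ)
        (fun x _ => analyticAt_mveval H x) (fun x _ => analyticAt_const) hev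
      apply hyw
      rw [← hH y]
      exact congrFun h0 y
    -- power series of f at 0
    obtain ⟨p, hpat⟩ := hf 0
    obtain ⟨r, hpr⟩ := hpat
    have hr0 : 0 < r := hpr.r_pos
    obtain ⟨r₀, hr₀pos, hr₀lt⟩ := ENNReal.lt_iff_exists_nnreal_btwn.mp hr0
    obtain ⟨C₀, hC₀pos, hC₀⟩ :=
      p.norm_mul_pow_le_of_lt_radius (hr₀lt.trans_le hpr.r_le)
    have hczero : ∀ n, D < n → ∀ z : Fin m → ℂ, lineSub z P ≠ 0 →
        p n (fun _ => z) = 0 := by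
      intro n hn z hz
      obtain ⟨q, hqdeg, hq⟩ := hline z hz
      set g : ℂ → ℂ := fun t => f (t • z) with hgdef
      set s2 : FormalMultilinearSeries ℂ ℂ ℂ :=
        fun k => q.coeff k • ContinuousMultilinearMap.mkPiAlgebraFin ℂ k ℂ with hs2def
      have happ2 : ∀ k (y : ℂ), (s2 k fun _ => y) = q.coeff k * y ^ k := by
        intro k y
        rw [hs2def]
        simp [ContinuousMultilinearMap.mkPiAlgebraFin_apply, List.prod_ofFn, smul_eq_mul]
      have hs2ball : HasFPowerSeriesOnBall (fun t : ℂ => q.eval t) s2 0 ⊤ := by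
        refine ⟨?_, ?_, ?_⟩
        · have hvan : ∀ k, s2 (k + (q.natDegree + 1)) = 0 := by
            intro k
            have hc0 : q.coeff (k + (q.natDegree + 1)) = 0 :=
              Polynomial.coeff_eq_zero_of_natDegree_lt (by omega)
            show q.coeff (k + (q.natDegree + 1)) •
              ContinuousMultilinearMap.mkPiAlgebraFin ℂ _ ℂ = 0
            rw [hc0]
            exact zero_smul ℂ (ContinuousMultilinearMap.mkPiAlgebraFin ℂ _ ℂ)
          exact le_of_eq
            (s2.radius_eq_top_of_forall_image_add_eq_zero (q.natDegree + 1) hvan).symm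
        · exact ENNReal.zero_lt_top
        · intro y hy
          simp only [zero_add]
          have hzero : ∀ k ∉ range (q.natDegree + 1), q.coeff k * y ^ k = 0 := by
            intro k hk
            have : q.coeff k = 0 :=
              Polynomial.coeff_eq_zero_of_natDegree_lt (by simpa using hk)
            rw [this, zero_mul]
          have hfs := hasSum_sum_of_ne_finset_zero (L := SummationFilter.unconditional ℕ) (s := range (q.natDegree + 1)) hzero
          rw [← Polynomial.eval_eq_sum_range] at hfs
          have : (fun k => s2 k fun _ => y) = fun k => q.coeff k * y ^ k := by
            funext k
            exact happ2 k y
          rw [this]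
          exact hfs
      set Zc : NNReal := ‖z‖₊ + 1 with hZc
      have hZc0 : Zc ≠ 0 := by
        rw [hZc]
        positivity
      set τ : NNReal := r₀ / Zc with hτ
      have hτ0 : 0 < τ :=
        div_pos (by exact_mod_cast hr₀pos) (pos_iff_ne_zero.mpr hZc0)
      have hτmul : τ * Zc = r₀ := div_mul_cancel₀ _ hZc0
      set s1 : FormalMultilinearSeries ℂ ℂ ℂ :=
        fun k => (p k fun _ => z) • ContinuousMultilinearMap.mkPiAlgebraFin ℂ k ℂ with hs1def
      have happ1 : ∀ k (y : ℂ), (s1 k fun _ => y) = (p k fun _ => z) * y ^ k := by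
        intro k y
        rw [hs1def]
        simp [ContinuousMultilinearMap.mkPiAlgebraFin_apply, List.prod_ofFn, smul_eq_mul]
      have hs1ball : HasFPowerSeriesOnBall g s1 0 ↑τ := by
        refine ⟨?_, ?_, ?_⟩
        · refine s1.le_radius_of_bound C₀ fun k => ?_
          have hb1 : ‖s1 k‖ ≤ ‖p k‖ * ‖z‖ ^ k := by
            have hrfl : s1 k = (p k fun _ => z) •
                ContinuousMultilinearMap.mkPiAlgebraFin ℂ k ℂ := rfl
            rw [hrfl]
            refine (ContinuousMultilinearMap.opNorm_smul_le _ _).trans ?_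
            rw [ContinuousMultilinearMap.norm_mkPiAlgebraFin, mul_one]
            refine ((p k).le_opNorm _).trans (le_of_eq ?_)
            congr 1
            simp [Finset.prod_const]
          have hzτ : ‖z‖ * (τ:ℝ) ≤ (r₀:ℝ) := by
            have h1 : (‖z‖:ℝ) ≤ (Zc:ℝ) := by
              rw [hZc, NNReal.coe_add, NNReal.coe_one, coe_nnnorm]
              linarith
            have h2 : (Zc:ℝ) * (τ:ℝ) = (r₀:ℝ) := by
              rw [← NNReal.coe_mul, mul_comm Zc τ, hτmul]
            calc ‖z‖ * (τ:ℝ) ≤ (Zc:ℝ) * (τ:ℝ) :=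
                  mul_le_mul_of_nonneg_right h1 (NNReal.coe_nonneg τ)
              _ = (r₀:ℝ) := h2
          calc ‖s1 k‖ * (τ:ℝ) ^ k ≤ (‖p k‖ * ‖z‖ ^ k) * (τ:ℝ) ^ k := by
                refine mul_le_mul_of_nonneg_right hb1 (by positivity)
            _ = ‖p k‖ * (‖z‖ * (τ:ℝ)) ^ k := by ring
            _ ≤ ‖p k‖ * (r₀:ℝ) ^ k := by
                refine mul_le_mul_of_nonneg_left
                  (pow_le_pow_left₀ (by positivity) hzτ _) (norm_nonneg _)
            _ ≤ C₀ := hC₀ k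
        · exact_mod_cast hτ0
        · intro t ht
          rw [mem_emetric_ball_zero_iff] at ht
          have htz : t • z ∈ Metric.eball (0 : Fin m → ℂ) r := by
            rw [mem_emetric_ball_zero_iff]
            have h1 : ‖t • z‖₊ ≤ ‖t‖₊ * Zc := by
              rw [nnnorm_smul]
              refine mul_le_mul_of_nonneg_left ?_ zero_le
              rw [hZc]
              exact le_self_add
            have h2 : ‖t‖₊ * Zc < τ * Zc := by
              refine mul_lt_mul_of_pos_right ?_ (pos_iff_ne_zero.mpr hZc0)
              exact_mod_cast ht
            rw [hτmul] at h2
            calc ((‖t • z‖₊ : NNReal) : ENNReal) ≤ (((‖t‖₊ * Zc) : NNReal) : ENNReal) := by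
                  exact_mod_cast h1
              _ < ((r₀ : NNReal) : ENNReal) := by exact_mod_cast h2
              _ < r := hr₀lt
          have hsum := hpr.hasSum htz
          simp only [zero_add] at hsum
          simp only [zero_add]
          have heq : ∀ k, (s1 k fun _ => t) = (p k fun _ => t • z) := by
            intro k
            have hms := (p k).map_smul_univ (fun _ : Fin k => t) (fun _ : Fin k => z)
            simp only [Finset.prod_const, Finset.card_univ, Fintype.card_fin] at hms
            rw [happ1, hms, smul_eq_mul, mul_comm]
          have hfuneq : (fun k => s1 k fun _ => t) = fun k => p k fun _ => t • z :=
            funext heq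
          rw [hfuneq]
          exact hsum
      have hgq : (fun t : ℂ => q.eval t) = g := funext fun t => (hq t).symm
      have hseq : s1 = s2 :=
        hs1ball.hasFPowerSeriesAt.eq_formalMultilinearSeries
          (hgq ▸ hs2ball.hasFPowerSeriesAt)
      have happly := congrArg (fun s : FormalMultilinearSeries ℂ ℂ ℂ => s n fun _ => (1:ℂ)) hseq
      simp only [happ1, happ2, one_pow, mul_one] at happly
      rw [happly, Polynomial.coeff_eq_zero_of_natDegree_lt (by omega)]
    have hczero' : ∀ n, D < n → ∀ z : Fin m → ℂ, p n (fun _ => z) = 0 := by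
      intro n hn
      have hcont : Continuous fun z : Fin m → ℂ => p n (fun _ => z) :=
        (p n).cont.comp (continuous_pi fun _ => continuous_id)
      have heqon : Set.EqOn (fun z : Fin m → ℂ => p n (fun _ => z)) (fun _ => 0)
          {z : Fin m → ℂ | MvPolynomial.eval z H ≠ 0} := by
        intro z hz
        exact hczero n hn z (hgood_of z (by rwa [← hH z]))
      have := Continuous.ext_on hdense hcont continuous_const heqon
      exact fun z => congrFun this z
    -- the polynomial given by each coefficient
    have hQn : ∀ n : ℕ, ∃ Qn : MvPolynomial (Fin m) ℂ,
        ∀ z : Fin m → ℂ, MvPolynomial.eval z Qn = p n (fun _ => z) := by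
      intro n
      refine ⟨∑ j : Fin n → Fin m,
        MvPolynomial.C (p n (fun i => (Pi.single (j i) (1:ℂ) : Fin m → ℂ)))
          * ∏ i : Fin n, MvPolynomial.X (j i), fun z => ?_⟩
      have hzdecomp : z = ∑ k : Fin m, z k • (Pi.single k (1:ℂ) : Fin m → ℂ) := by
        have h5 : ∀ k : Fin m, z k • (Pi.single k (1:ℂ) : Fin m → ℂ) = (Pi.single k (z k) : Fin m → ℂ) := by
          intro k
          rw [← Pi.single_smul, smul_eq_mul, mul_one]
        rw [Finset.sum_congr rfl fun k _ => h5 k]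
        exact (Finset.univ_sum_single z).symm
      have hmain : (p n fun _ : Fin n => z)
          = ∑ j : Fin n → Fin m,
              (∏ i : Fin n, z (j i)) • p n (fun i => (Pi.single (j i) (1:ℂ) : Fin m → ℂ)) := by
        conv_lhs => rw [show (fun _ : Fin n => z)
          = (fun _ : Fin n => ∑ k : Fin m, z k • (Pi.single k (1:ℂ) : Fin m → ℂ)) from
            funext fun _ => hzdecomp]
        rw [(p n).map_sum]
        refine Finset.sum_congr rfl fun j _ => ?_
        exact (p n).map_smul_univ (fun i => z (j i)) (fun i => (Pi.single (j i) (1:ℂ) : Fin m → ℂ))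
      rw [hmain, map_sum]
      refine Finset.sum_congr rfl fun j _ => ?_
      rw [map_mul, MvPolynomial.eval_C, map_prod]
      simp only [MvPolynomial.eval_X, smul_eq_mul]
      ring
    choose Qn hQn using hQn
    refine ⟨∑ n ∈ range (D+1), Qn n, ?_⟩
    have hloc : f =ᶠ[nhds 0] fun z => MvPolynomial.eval z (∑ n ∈ range (D+1), Qn n) := by
      filter_upwards [EMetric.ball_mem_nhds (0 : Fin m → ℂ) hr0] with z hzball
      have hsum := hpr.hasSum hzball
      simp only [zero_add] at hsum
      have hfin : ∀ n ∉ range (D+1), (p n fun _ => z) = 0 := fun n hn =>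
        hczero' n (by simpa using hn) z
      have hval := hsum.unique (hasSum_sum_of_ne_finset_zero hfin)
      rw [hval, map_sum]
      exact Finset.sum_congr rfl fun n _ => (hQn n z).symm
    have hglob := AnalyticOnNhd.eq_of_eventuallyEq (𝕜 := ℂ) (fun x _ => hf x)
      (fun x _ => analyticAt_mveval _ x) hloc
    exact fun z => congrFun hglob z
  · rintro ⟨Q, hQ⟩
    refine ⟨MvPolynomial.X (Fin.last m) - MvPolynomial.rename (Fin.castSucc) Q, ?_, ?_⟩
    · intro h0
      have h2 : MvPolynomial.eval
          (Fin.snoc (0 : Fin m → ℂ) (MvPolynomial.eval 0 Q + 1))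
          (MvPolynomial.X (Fin.last m) - MvPolynomial.rename (Fin.castSucc) Q) = 0 := by
        rw [h0, map_zero]
      rw [map_sub, MvPolynomial.eval_X, Fin.snoc_last, MvPolynomial.eval_rename] at h2
      have h3 : Fin.snoc (0 : Fin m → ℂ) (MvPolynomial.eval 0 Q + 1) ∘ Fin.castSucc
          = (0 : Fin m → ℂ) := by
        funext j
        simp [Fin.snoc_castSucc]
      rw [h3] at h2
      simp at h2
    · intro z
      rw [map_sub, MvPolynomial.eval_X, Fin.snoc_last, MvPolynomial.eval_rename]
      have h3 : Fin.snoc z (f z) ∘ Fin.castSucc = z := by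
        funext j
        simp [Fin.snoc_castSucc]
      rw [h3, ← hQ z, sub_self]
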